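/- Let H be a complex Hilbert space, 𝔄 a C*-algebra acting on H, σ : 𝔄 → B(H) a linear map, and d : 𝔄 → B(H) a continuous *-σ-derivation. Then there exists a continuous linear map Σ : 𝔄 → B(H) such that d is a *-Σ-derivation, i.e., d(AB) = d(A)Σ(B) + Σ(A)d(B) for all A, B ∈ 𝔄 and d(A*) = d(A)* for all A ∈ 𝔄. -/

import Mathlib

set_option maxHeartbeats 1000000 in
/-- **Theorem 3.2.** Let `𝔄` be a C*-algebra acting on a Hilbert space `H`,
`σ : 𝔄 → B(H)` a linear map and `d : 𝔄 → B(H)` a continuous `*`-`σ`-derivation.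
Then there is a continuous linear map `Σ : 𝔄 → B(H)` such that `d` is a
`*`-`Σ`-derivation. -/
theorem stmt_7 {H : Type*} [NormedAddCommGroup H] [InnerProductSpace ℂ H]
    [CompleteSpace H]
    (𝔄 : NonUnitalStarSubalgebra ℂ (H →L[ℂ] H))
    (hcl : IsClosed (𝔄 : Set (H →L[ℂ] H)))
    (σ d : 𝔄 →ₗ[ℂ] (H →L[ℂ] H))
    (hd_cont : Continuous d)
    (hd : ∀ A B : 𝔄, d (A * B) = d A * σ B + σ A * d B)
    (hd_star : ∀ A : 𝔄, d (star A) = star (d A)) :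
    ∃ Sig : 𝔄 →ₗ[ℂ] (H →L[ℂ] H), Continuous Sig ∧
      (∀ A B : 𝔄, d (A * B) = d A * Sig B + Sig A * d B) ∧
      (∀ A : 𝔄, d (star A) = star (d A)) := by
  classical
  haveI : CompleteSpace 𝔄 := hcl.completeSpace_coe
  -- the essential subspace: closure of the span of the ranges of all `d A`
  set K₀ : Submodule ℂ H := ⨆ A : 𝔄, LinearMap.range ((d A : H →L[ℂ] H) : H →ₗ[ℂ] H) with hK₀
  set K : Submodule ℂ H := K₀.topologicalClosure with hK
  haveI : CompleteSpace K := (Submodule.isClosed_topologicalClosure K₀).completeSpace_coe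
  have hmemK : ∀ (A : 𝔄) (x : H), d A x ∈ K := by
    intro A x
    exact K₀.le_topologicalClosure
      (Submodule.mem_iSup_of_mem A (LinearMap.mem_range_self _ x))
  -- `Pc` : the orthogonal projection onto `K`, as an operator on `H`
  set Pc : H →L[ℂ] H := K.subtypeL.comp (Submodule.orthogonalProjectionOnto K) with hPc
  have hPfix : ∀ x : H, x ∈ K → Pc x = x := by
    intro x hx
    simp only [hPc, ContinuousLinearMap.comp_apply, Submodule.subtypeL_apply]
    exact congrArg _ (Submodule.orthogonalProjectionOnto_mem_subspace_eq_self (⟨x, hx⟩ : K))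
  have hPP : Pc * Pc = Pc := by
    ext x
    exact hPfix _ (Submodule.coe_mem (Submodule.orthogonalProjectionOnto K x))
  -- `d A` kills `Kᗮ`
  have hker : ∀ (A : 𝔄) (w : H), w ∈ Kᗮ → d A w = 0 := by
    intro A w hw
    have h0 : ∀ z : H, inner (𝕜 := ℂ) (d A w) z = 0 := by
      intro z
      have h1 : inner (𝕜 := ℂ) (d A w) z
          = inner (𝕜 := ℂ) w (ContinuousLinearMap.adjoint (d A) z) :=
        (ContinuousLinearMap.adjoint_inner_right (d A) w z).symm
      have h2 : ContinuousLinearMap.adjoint (d A) = d (star A) := by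
        rw [hd_star A, ContinuousLinearMap.star_eq_adjoint]
      rw [h1, h2]
      exact (Submodule.mem_orthogonal' K w).mp hw _ (hmemK (star A) z)
    have := h0 (d A w)
    rwa [inner_self_eq_zero] at this
  have hdP' : ∀ (A : 𝔄) (v : H), d A (Pc v) = d A v := by
    intro A v
    have hsub : v - Pc v ∈ Kᗮ := Submodule.sub_starProjection_mem_orthogonal (K := K) v
    have h0 := hker A _ hsub
    rw [map_sub] at h0
    exact (sub_eq_zero.mp h0).symm
  -- the compressed map `Σ A = Pc (σ A) Pc`
  set Sig : 𝔄 →ₗ[ℂ] (H →L[ℂ] H) :=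
    { toFun := fun A => Pc * σ A * Pc
      map_add' := by intro A B; simp [map_add, mul_add, add_mul]
      map_smul' := by intro c A; simp [map_smul, mul_smul_comm, smul_mul_assoc] } with hSig
  have hSig_apply : ∀ A : 𝔄, Sig A = Pc * σ A * Pc := fun A => rfl
  -- `Σ` satisfies the Leibniz rule
  have hder : ∀ A B : 𝔄, d (A * B) = d A * Sig B + Sig A * d B := by
    intro A B
    ext x
    have hrhs : (d A * Sig B + Sig A * d B) x
        = d A (σ B (Pc x)) + Pc (σ A (d B x)) := by
      simp only [hSig_apply, ContinuousLinearMap.add_apply, ContinuousLinearMap.mul_apply]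
      rw [hPfix _ (hmemK B x), hdP' A]
    rw [hrhs]
    calc d (A * B) x = Pc (d (A * B) (Pc x)) := by
          rw [hdP' (A * B) x, hPfix _ (hmemK (A * B) x)]
      _ = Pc (d A (σ B (Pc x)) + σ A (d B (Pc x))) := by
          rw [hd A B]
          simp [ContinuousLinearMap.add_apply, ContinuousLinearMap.mul_apply]
      _ = Pc (d A (σ B (Pc x))) + Pc (σ A (d B (Pc x))) := map_add _ _ _
      _ = d A (σ B (Pc x)) + Pc (σ A (d B x)) := by
          rw [hPfix _ (hmemK A _), hdP' B]
  -- corner identity for `Σ`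
  have hSigP : ∀ A : 𝔄, Sig A * Pc = Sig A := by
    intro A
    rw [hSig_apply, mul_assoc (Pc * σ A) Pc Pc, hPP]
  -- continuity via the closed graph theorem
  have hcont : Continuous Sig := by
    apply Sig.continuous_of_seq_closed_graph
    intro u x y hu hy
    have hy' : Filter.Tendsto (fun n => Sig (u n)) Filter.atTop (nhds y) := hy
    -- `y * Pc = y`
    have hyP : y * Pc = y := by
      have h1 : Filter.Tendsto (fun n => Sig (u n) * Pc) Filter.atTop (nhds (y * Pc)) :=
        hy'.mul tendsto_const_nhds
      have h2 : (fun n => Sig (u n) * Pc) = fun n => Sig (u n) := by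
        funext n; exact hSigP (u n)
      rw [h2] at h1
      exact tendsto_nhds_unique h1 hy'
    -- coercion limit
    have hcu : Filter.Tendsto (fun n => ((u n : 𝔄) : H →L[ℂ] H)) Filter.atTop
        (nhds ((x : 𝔄) : H →L[ℂ] H)) :=
      (continuous_subtype_val.tendsto _).comp hu
    -- `y * d B = Sig x * d B` for every `B`
    have key : ∀ B : 𝔄, y * d B = Sig x * d B := by
      intro B
      have hmul : Filter.Tendsto (fun n => u n * B) Filter.atTop (nhds (x * B)) := by
        rw [tendsto_subtype_rng]
        exact hcu.mul tendsto_const_nhds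
      have t1 : Filter.Tendsto (fun n => Sig (u n) * d B) Filter.atTop (nhds (y * d B)) :=
        hy'.mul tendsto_const_nhds
      have t2 : Filter.Tendsto (fun n => d (u n * B) - d (u n) * Sig B) Filter.atTop
          (nhds (d (x * B) - d x * Sig B)) :=
        ((hd_cont.tendsto _).comp hmul).sub
          (((hd_cont.tendsto _).comp hu).mul tendsto_const_nhds)
      have heq : (fun n => Sig (u n) * d B) = fun n => d (u n * B) - d (u n) * Sig B := by
        funext n
        rw [hder (u n) B]
        abel
      rw [heq] at t1
      have h3 := tendsto_nhds_unique t1 t2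
      rw [h3, hder x B]
      abel
    -- conclude `y = Sig x`
    have hagree : K ≤ LinearMap.eqLocus (y : H →ₗ[ℂ] H) (Sig x : H →ₗ[ℂ] H) := by
      apply Submodule.topologicalClosure_minimal
      · rw [hK₀]
        apply iSup_le
        intro B
        rintro _ ⟨z, rfl⟩
        have := congrArg (fun T : H →L[ℂ] H => T z) (key B)
        simpa [ContinuousLinearMap.mul_apply] using this
      · have he : (LinearMap.eqLocus (y : H →ₗ[ℂ] H) (Sig x : H →ₗ[ℂ] H) : Set H)
            = {v : H | y v = Sig x v} := rfl
        rw [he]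
        exact isClosed_eq y.continuous (Sig x).continuous
    ext v
    have h1 : y v = y (Pc v) := by
      conv_lhs => rw [← hyP]
      simp [ContinuousLinearMap.mul_apply]
    have h2 : Sig x v = Sig x (Pc v) := by
      conv_lhs => rw [← hSigP x]
      simp [ContinuousLinearMap.mul_apply]
    have h3 : Pc v ∈ K := Submodule.coe_mem (Submodule.orthogonalProjectionOnto K v)
    have h4 : y (Pc v) = Sig x (Pc v) := hagree h3
    rw [h1, h4, ← h2]
  exact ⟨Sig, hcont, hder, hd_star⟩
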